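/- Let β > 0 and let (I_x)_{x∈ℤ} be real parameters. For all integers m and n with n ≥ m + 2, and all integers r with 1 ≤ r ≤ n − m + 1, the crystal partition function X^r_{m,n} satisfies the single recursive equation X^r_{m,n} = X^r_{m,n−1} + e^{−β(I_{n+1} − I_n)}·( X^{r−1}_{m,n−1} − X^{r−1}_{m,n−2} ) + e^{−β(I_n + I_{n+1})}·X^{r−1}_{m,n−2}, with the convention X^s_{m,n'} = 0 whenever s < 0 or s > n' − m + 1. -/

import Mathlib

open Finset

/-- Spin configurations on the box `[m, n] ⊆ ℤ`, encoded as boolean functions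
(`true` ↔ spin `+1`, `false` ↔ spin `-1`). -/
abbrev Config (m n : ℤ) := {x // x ∈ Finset.Icc m n} → Bool

/-- The spin value `±1` of the configuration `σ` at the site `x` (value `1` off the box). -/
noncomputable def spin {m n : ℤ} (σ : Config m n) (x : ℤ) : ℝ :=
  if h : x ∈ Finset.Icc m n then (if σ ⟨x, h⟩ then 1 else -1) else 1

/-- The number `N_+(σ)` of sites where `σ` takes the value `+1`. -/
noncomputable def Nplus {m n : ℤ} (σ : Config m n) : ℕ :=
  (Finset.univ.filter fun x => σ x = true).card

/-- The Hamiltonian `H^-` on `[m, n]` with minus boundary spin on both sides. -/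
noncomputable def Hminus (I : ℤ → ℝ) (m n : ℤ) (σ : Config m n) : ℝ :=
  (∑ x ∈ Finset.Icc (m + 1) n, I x * (if spin σ (x - 1) ≠ spin σ x then 1 else 0))
    + I m * (if spin σ m ≠ -1 then 1 else 0)
    + I (n + 1) * (if spin σ n ≠ -1 then 1 else 0)

/-- The Hamiltonian `H^∓` on `[m, n]`: minus boundary spin on the left,
plus boundary spin on the right. -/
noncomputable def Hmp (I : ℤ → ℝ) (m n : ℤ) (σ : Config m n) : ℝ :=
  (∑ x ∈ Finset.Icc (m + 1) n, I x * (if spin σ (x - 1) ≠ spin σ x then 1 else 0))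
    + I m * (if spin σ m ≠ -1 then 1 else 0)
    + I (n + 1) * (if spin σ n ≠ 1 then 1 else 0)

/-- The crystal partition function `X^r_{m,n}` (minus boundary on both sides),
defined for every integer `r`; it vanishes automatically when `r < 0` or
`r > n - m + 1`. -/
noncomputable def X (β : ℝ) (I : ℤ → ℝ) (m n : ℤ) (r : ℤ) : ℝ :=
  ∑ σ ∈ Finset.univ.filter (fun σ : Config m n => (Nplus σ : ℤ) = r),
    Real.exp (-β * Hminus I m n σ)

/-- The crystal partition function `Y^r_{m,n}` (minus boundary on the left,
plus on the right), defined for every integer `r`; it vanishes automatically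
when `r < 0` or `r > n - m + 1`. -/
noncomputable def Y (β : ℝ) (I : ℤ → ℝ) (m n : ℤ) (r : ℤ) : ℝ :=
  ∑ σ ∈ Finset.univ.filter (fun σ : Config m n => (Nplus σ : ℤ) = r),
    Real.exp (-β * Hmp I m n σ)

lemma Icc_split {a b : ℤ} (h : a ≤ b) :
    Finset.Icc a b = insert b (Finset.Icc a (b-1)) := by
  ext x; simp only [Finset.mem_Icc, Finset.mem_insert]; omega

lemma not_mem_tail {a b : ℤ} : b ∉ Finset.Icc a (b-1) := by
  simp only [Finset.mem_Icc]; omega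

noncomputable def extendC {m n : ℤ} (p : Config m (n-1) × Bool) : Config m n :=
  fun x => if h : (x : ℤ) ∈ Finset.Icc m (n-1) then p.1 ⟨(x : ℤ), h⟩ else p.2

lemma spin_extend_ne {m n : ℤ} (p : Config m (n-1) × Bool) {x : ℤ} (hx : x ≠ n) :
    spin (extendC p) x = spin p.1 x := by
  unfold spin extendC
  by_cases h1 : x ∈ Finset.Icc m (n-1)
  · have h2 : x ∈ Finset.Icc m n := by
      simp only [Finset.mem_Icc] at h1 ⊢; omega
    rw [dif_pos h2, dif_pos h1, dif_pos h1]
  · have h2 : x ∉ Finset.Icc m n := by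
      simp only [Finset.mem_Icc] at h1 ⊢; omega
    rw [dif_neg h2, dif_neg h1]

lemma spin_extend_top {m n : ℤ} (h : m ≤ n) (p : Config m (n-1) × Bool) :
    spin (extendC p) n = if p.2 then 1 else -1 := by
  have h2 : n ∈ Finset.Icc m n := by simp [Finset.mem_Icc, h]
  unfold spin extendC
  rw [dif_pos h2, dif_neg not_mem_tail]

noncomputable def splitEquiv {m n : ℤ} (h : m ≤ n) : Config m n ≃ Config m (n-1) × Bool where
  toFun σ := (fun x => σ ⟨(x : ℤ), by
                have := x.2; simp only [Finset.mem_Icc] at this ⊢; omega⟩,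
              σ ⟨n, by simp only [Finset.mem_Icc]; omega⟩)
  invFun := extendC
  left_inv σ := by
    funext x
    simp only [extendC]
    split
    · exact congrArg σ (Subtype.ext rfl)
    · next h1 =>
      have hx : (x : ℤ) = n := by
        have := x.2; simp only [Finset.mem_Icc] at this h1; omega
      exact congrArg σ (Subtype.ext hx.symm)
  right_inv p := by
    refine Prod.ext ?_ ?_
    · funext x
      simp only [extendC]
      rw [dif_pos x.2]
    · simp only [extendC]
      rw [dif_neg not_mem_tail]

lemma nplus_sum {m n : ℤ} (σ : Config m n) :
    (Nplus σ : ℤ) = ∑ x ∈ Finset.Icc m n, (if spin σ x = 1 then (1:ℤ) else 0) := by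
  rw [Nplus, Finset.card_filter]
  push_cast
  rw [Finset.univ_eq_attach,
    ← Finset.sum_attach (Finset.Icc m n) (fun x => if spin σ x = 1 then (1:ℤ) else 0)]
  refine Finset.sum_congr rfl fun x _ => ?_
  rw [spin, dif_pos x.2]
  cases h : σ x <;> simp [h] <;> norm_num

lemma nplus_extend {m n : ℤ} (h : m ≤ n) (p : Config m (n-1) × Bool) :
    (Nplus (extendC p) : ℤ) = (Nplus p.1 : ℤ) + (if p.2 then 1 else 0) := by
  rw [nplus_sum, nplus_sum, Icc_split h, Finset.sum_insert not_mem_tail, spin_extend_top h]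
  have hs : ∑ x ∈ Finset.Icc m (n-1), (if spin (extendC p) x = 1 then (1:ℤ) else 0)
       = ∑ x ∈ Finset.Icc m (n-1), (if spin p.1 x = 1 then (1:ℤ) else 0) := by
    refine Finset.sum_congr rfl fun x hx => ?_
    rw [spin_extend_ne p (by simp only [Finset.mem_Icc] at hx; omega)]
  rw [hs]
  cases hp : p.2 <;> norm_num <;> ring

lemma interaction_extend {I : ℤ → ℝ} {m n : ℤ} (h : m + 1 ≤ n) (p : Config m (n-1) × Bool) :
    ∑ x ∈ Finset.Icc (m+1) n, I x * (if spin (extendC p) (x-1) ≠ spin (extendC p) x then 1 else 0)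
  = (∑ x ∈ Finset.Icc (m+1) (n-1), I x * (if spin p.1 (x-1) ≠ spin p.1 x then 1 else 0))
    + I n * (if spin p.1 (n-1) ≠ (if p.2 then 1 else -1) then 1 else 0) := by
  rw [Icc_split h, Finset.sum_insert not_mem_tail,
    spin_extend_ne p (by omega : n - 1 ≠ n), spin_extend_top (by omega) p]
  have hs : ∑ x ∈ Finset.Icc (m+1) (n-1),
        I x * (if spin (extendC p) (x-1) ≠ spin (extendC p) x then 1 else 0)
      = ∑ x ∈ Finset.Icc (m+1) (n-1), I x * (if spin p.1 (x-1) ≠ spin p.1 x then 1 else 0) := by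
    refine Finset.sum_congr rfl fun x hx => ?_
    simp only [Finset.mem_Icc] at hx
    rw [spin_extend_ne p (by omega : x ≠ n), spin_extend_ne p (by omega : x - 1 ≠ n)]
  rw [hs, add_comm]

lemma spin_extend_bot {m n : ℤ} (h : m + 1 ≤ n) (p : Config m (n-1) × Bool) :
    spin (extendC p) m = spin p.1 m := spin_extend_ne p (by omega)

lemma hminus_extend_false {I : ℤ → ℝ} {m n : ℤ} (h : m + 1 ≤ n) (τ : Config m (n-1)) :
    Hminus I m n (extendC (τ, false)) = Hminus I m (n-1) τ := by
  have hn : n - 1 + 1 = n := by ring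
  rw [Hminus, Hminus, hn, interaction_extend h, spin_extend_bot h, spin_extend_top (by omega)]
  norm_num
  ring

lemma hminus_extend_true {I : ℤ → ℝ} {m n : ℤ} (h : m + 1 ≤ n) (τ : Config m (n-1)) :
    Hminus I m n (extendC (τ, true)) = I (n+1) + Hmp I m (n-1) τ := by
  have hn : n - 1 + 1 = n := by ring
  rw [Hminus, Hmp, hn, interaction_extend h, spin_extend_bot h, spin_extend_top (by omega)]
  norm_num
  ring

lemma hmp_extend_true {I : ℤ → ℝ} {m n : ℤ} (h : m + 1 ≤ n) (τ : Config m (n-1)) :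
    Hmp I m n (extendC (τ, true)) = Hmp I m (n-1) τ := by
  have hn : n - 1 + 1 = n := by ring
  rw [Hmp, Hmp, hn, interaction_extend h, spin_extend_bot h, spin_extend_top (by omega)]
  norm_num
  ring

lemma hmp_extend_false {I : ℤ → ℝ} {m n : ℤ} (h : m + 1 ≤ n) (τ : Config m (n-1)) :
    Hmp I m n (extendC (τ, false)) = I (n+1) + Hminus I m (n-1) τ := by
  have hn : n - 1 + 1 = n := by ring
  rw [Hmp, Hminus, hn, interaction_extend h, spin_extend_bot h, spin_extend_top (by omega)]
  norm_num
  ring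

lemma X_step (β : ℝ) (I : ℤ → ℝ) (m n : ℤ) (h : m + 1 ≤ n) (r : ℤ) :
    X β I m n r = X β I m (n-1) r + Real.exp (-β * I (n+1)) * Y β I m (n-1) (r-1) := by
  have hmn : m ≤ n := by omega
  rw [X, X, Y, Finset.sum_filter, Finset.sum_filter, Finset.sum_filter,
    ← Equiv.sum_comp (splitEquiv hmn).symm
      (fun σ : Config m n => if (Nplus σ : ℤ) = r then Real.exp (-β * Hminus I m n σ) else 0),
    Fintype.sum_prod_type, Finset.mul_sum, ← Finset.sum_add_distrib]
  refine Finset.sum_congr rfl fun τ _ => ?_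
  rw [Fintype.sum_bool]
  have hsymm : ∀ p : Config m (n-1) × Bool, (splitEquiv hmn).symm p = extendC p := fun _ => rfl
  simp only [hsymm, nplus_extend hmn, hminus_extend_true h, hminus_extend_false h]
  norm_num
  have e1 : ((Nplus τ : ℤ) + 1 = r) ↔ ((Nplus τ : ℤ) = r - 1) := by omega
  rw [if_congr e1 rfl rfl]
  have e3 : -(β * (I (n+1) + Hmp I m (n-1) τ)) = -(β * I (n+1)) + -(β * Hmp I m (n-1) τ) := by
    ring
  rw [e3, Real.exp_add]
  ring

lemma Y_step (β : ℝ) (I : ℤ → ℝ) (m n : ℤ) (h : m + 1 ≤ n) (r : ℤ) :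
    Y β I m n r = Real.exp (-β * I (n+1)) * X β I m (n-1) r + Y β I m (n-1) (r-1) := by
  have hmn : m ≤ n := by omega
  rw [Y, X, Y, Finset.sum_filter, Finset.sum_filter, Finset.sum_filter,
    ← Equiv.sum_comp (splitEquiv hmn).symm
      (fun σ : Config m n => if (Nplus σ : ℤ) = r then Real.exp (-β * Hmp I m n σ) else 0),
    Fintype.sum_prod_type, Finset.mul_sum, ← Finset.sum_add_distrib]
  refine Finset.sum_congr rfl fun τ _ => ?_
  rw [Fintype.sum_bool]
  have hsymm : ∀ p : Config m (n-1) × Bool, (splitEquiv hmn).symm p = extendC p := fun _ => rfl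
  simp only [hsymm, nplus_extend hmn, hmp_extend_true h, hmp_extend_false h]
  norm_num
  have e1 : ((Nplus τ : ℤ) + 1 = r) ↔ ((Nplus τ : ℤ) = r - 1) := by omega
  rw [if_congr e1 rfl rfl]
  have e3 : -(β * (I (n+1) + Hminus I m (n-1) τ)) = -(β * I (n+1)) + -(β * Hminus I m (n-1) τ) := by
    ring
  rw [e3, Real.exp_add]
  ring


/-- The single recursive equation (18) for the crystal partition function
`X^r_{m,n}` (here `X^s_{m,n'} = 0` automatically whenever `s < 0` or
`s > n' - m + 1`). -/
theorem stmt_8 (β : ℝ) (hβ : 0 < β) (I : ℤ → ℝ)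
    (m n : ℤ) (hmn : m + 2 ≤ n) (r : ℤ) (hr0 : 1 ≤ r) (hr1 : r ≤ n - m + 1) :
    X β I m n r = X β I m (n - 1) r
        + Real.exp (-β * (I (n + 1) - I n)) * (X β I m (n - 1) (r - 1) - X β I m (n - 2) (r - 1))
        + Real.exp (-β * (I n + I (n + 1))) * X β I m (n - 2) (r - 1) := by
  have h1 := X_step β I m n (by omega) r
  have h2 := Y_step β I m (n-1) (by omega) (r-1)
  have h3 := X_step β I m (n-1) (by omega) (r-1)
  simp only [show n - 1 + 1 = n from by ring, show n - 1 - 1 = n - 2 from by ring] at h2 h3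
  have he1 : Real.exp (-β * (I (n+1) - I n)) * Real.exp (-β * I n)
      = Real.exp (-β * I (n+1)) := by
    rw [← Real.exp_add]; ring_nf
  have he2 : Real.exp (-β * (I n + I (n+1)))
      = Real.exp (-β * I n) * Real.exp (-β * I (n+1)) := by
    rw [← Real.exp_add]; ring_nf
  linear_combination h1 + Real.exp (-β * I (n+1)) * h2
    - Real.exp (-β * (I (n+1) - I n)) * h3
    - Y β I m (n-2) (r-1-1) * he1 - X β I m (n-2) (r-1) * he2
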